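/- Let H be a k-regular finite graph with |V(H)| ≥ 3 and χ_δ(H) ≥ 2, and let G = K₁ ∨ H be the join of a single vertex with H. If |V(H)| > k + 2, then χ_δ(G □ P₃) ≤ 2 χ_δ(H). -/

import Mathlib

open scoped Classical
open SimpleGraph

/-- The δ-complement of a graph: `u v` are adjacent iff they are distinct and
either they have equal degrees and are non-adjacent in `G`, or they have
different degrees and are adjacent in `G`. -/
def deltaComp {V : Type*} [Fintype V] (G : SimpleGraph V) : SimpleGraph V where
  Adj u v := u ≠ v ∧ ((G.degree u = G.degree v ∧ ¬ G.Adj u v) ∨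
    (G.degree u ≠ G.degree v ∧ G.Adj u v))
  symm := ⟨by
    intro u v h
    refine ⟨h.1.symm, ?_⟩
    rcases h.2 with ⟨hd, ha⟩ | ⟨hd, ha⟩
    · exact Or.inl ⟨hd.symm, fun hh => ha hh.symm⟩
    · exact Or.inr ⟨fun hh => hd hh.symm, ha.symm⟩⟩
  loopless := ⟨fun v h => h.1 rfl⟩

/-- The δ-chromatic number: chromatic number of the δ-complement. -/
noncomputable def deltaChrom {V : Type*} [Fintype V] (G : SimpleGraph V) : ℕ∞ :=
  (deltaComp G).chromaticNumber

/-- The join of a single new vertex with `H`: the cone over `H`. -/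
def coneGraph {V : Type*} (H : SimpleGraph V) : SimpleGraph (Option V) where
  Adj u v :=
    match u, v with
    | some a, some b => H.Adj a b
    | some _, none => True
    | none, some _ => True
    | none, none => False
  symm := ⟨by
    rintro (_ | a) (_ | b) h <;> simp_all
    exact h.symm⟩
  loopless := ⟨by
    rintro (_ | a) h <;> simp_all⟩

section Aux

lemma modsucc_inj {n x y : ℕ} (hn : 2 ≤ n) (hx : x < n) (hy : y < n)
    (h : (x+1) % n = (y+1) % n) : x = y := by
  rcases Nat.lt_or_ge (x+1) n with h1|h1 <;> rcases Nat.lt_or_ge (y+1) n with h2|h2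
  · rw [Nat.mod_eq_of_lt h1, Nat.mod_eq_of_lt h2] at h; omega
  · have ey : y + 1 = n := by omega
    rw [ey, Nat.mod_self, Nat.mod_eq_of_lt h1] at h; omega
  · have ex : x + 1 = n := by omega
    rw [ex, Nat.mod_self, Nat.mod_eq_of_lt h2] at h; omega
  · omega

lemma modsucc_ne {n x : ℕ} (hn : 2 ≤ n) (hx : x < n) : (x+1) % n ≠ x := by
  rcases Nat.lt_or_ge (x+1) n with h1|h1
  · rw [Nat.mod_eq_of_lt h1]; omega
  · have ex : x + 1 = n := by omega
    rw [ex, Nat.mod_self]; omega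

lemma degree_inst_irrel {V : Type*} (G : SimpleGraph V) (v : V)
    (i1 i2 : Fintype (G.neighborSet v)) :
    @SimpleGraph.degree V G v i1 = @SimpleGraph.degree V G v i2 := by
  rw [Subsingleton.elim i1 i2]

variable {V : Type*} [Fintype V] (H : SimpleGraph V)

lemma cone_deg_none : (coneGraph H).degree none = Fintype.card V := by
  have h : (coneGraph H).neighborFinset none
      = Finset.univ.map ⟨some, Option.some_injective V⟩ := by
    ext w
    cases w with
    | none =>
        simp only [mem_neighborFinset]
        exact iff_of_false (fun h => h) (by simp)
    | some a =>
        simp only [mem_neighborFinset]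
        exact iff_of_true trivial (by simp)
  rw [SimpleGraph.degree, h, Finset.card_map, Finset.card_univ]

lemma cone_deg_some (a : V) : (coneGraph H).degree (some a) = H.degree a + 1 := by
  have h : (coneGraph H).neighborFinset (some a)
      = insert none ((H.neighborFinset a).map ⟨some, Option.some_injective V⟩) := by
    ext w
    cases w with
    | none =>
        simp only [mem_neighborFinset]
        exact iff_of_true trivial (by simp)
    | some b =>
        simp only [mem_neighborFinset, Finset.mem_insert, Finset.mem_map,
          Function.Embedding.coeFn_mk]
        constructor
        · intro hb; exact Or.inr ⟨b, hb, rfl⟩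
        · rintro (h | ⟨c, hc, hcb⟩)
          · exact absurd h (by simp)
          · cases hcb; exact hc
  rw [SimpleGraph.degree, h, Finset.card_insert_of_notMem (by simp), Finset.card_map]
  rfl

lemma path_deg (i : Fin 3) : (pathGraph 3).degree i = if i.val = 1 then 2 else 1 := by
  have h0 : (pathGraph 3).neighborFinset 0 = {1} := by
    ext w; simp only [mem_neighborFinset, pathGraph_adj, Finset.mem_singleton]
    fin_cases w <;> simp
  have h1 : (pathGraph 3).neighborFinset 1 = {0, 2} := by
    ext w; simp only [mem_neighborFinset, pathGraph_adj, Finset.mem_insert, Finset.mem_singleton]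
    fin_cases w <;> simp
  have h2 : (pathGraph 3).neighborFinset 2 = {1} := by
    ext w; simp only [mem_neighborFinset, pathGraph_adj, Finset.mem_singleton]
    fin_cases w <;> simp
  fin_cases i <;> rw [SimpleGraph.degree] <;>
    [rw [show (pathGraph 3).neighborFinset ⟨0, by omega⟩ = {1} from h0];
     rw [show (pathGraph 3).neighborFinset ⟨1, by omega⟩ = {0, 2} from h1];
     rw [show (pathGraph 3).neighborFinset ⟨2, by omega⟩ = {1} from h2]] <;> rfl

/-- Color function for the δ-complement of the product. -/
def colF (n : ℕ) {V : Type*} (f : V → ℕ) : Option V → ℕ → ℕ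
  | none, m => if m = 0 then n else if m = 1 then 1 else 0
  | some a, m => if m = 0 then f a else if m = 1 then n + (f a + 1) % n else n + f a

lemma colF_none (n : ℕ) {V : Type*} (f : V → ℕ) (m : ℕ) :
    colF n f none m = if m = 0 then n else if m = 1 then 1 else 0 := rfl

lemma colF_some (n : ℕ) {V : Type*} (f : V → ℕ) (a : V) (m : ℕ) :
    colF n f (some a) m = if m = 0 then f a
      else if m = 1 then n + (f a + 1) % n else n + f a := rfl

end Aux

/-- For a `k`-regular graph `H` with at least `3` vertices, `χ_δ(H) ≥ 2` and
`|V(H)| > k + 2`, the cone `G = K₁ ∨ H` satisfies `χ_δ(G □ P₃) ≤ 2 χ_δ(H)`. -/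
theorem deltaChrom_cone_boxProd_path_three_le {V : Type*} [Fintype V]
    (H : SimpleGraph V) (k : ℕ) (hreg : H.IsRegularOfDegree k)
    (hcard : 3 ≤ Fintype.card V) (hchi : 2 ≤ deltaChrom H)
    (hk : k + 2 < Fintype.card V) :
    deltaChrom (coneGraph H □ pathGraph 3) ≤ 2 * deltaChrom H := by
  have hcol0 : (deltaComp H).Colorable (Fintype.card V) :=
    (deltaComp H).colorable_of_fintype
  have hnetop : (deltaComp H).chromaticNumber ≠ ⊤ :=
    chromaticNumber_ne_top_iff_exists.mpr ⟨_, hcol0⟩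
  obtain ⟨C⟩ := colorable_chromaticNumber hcol0
  set n := (deltaComp H).chromaticNumber.toNat with hn
  have hcast : (n : ℕ∞) = deltaChrom H := ENat.coe_toNat hnetop
  have hn2 : 2 ≤ n := by
    have h2 : (2 : ℕ∞) ≤ (n : ℕ∞) := by rw [hcast]; exact hchi
    exact_mod_cast h2
  set f : V → ℕ := fun a => (C a : ℕ) with hf
  have hflt : ∀ a, f a < n := fun a => (C a).isLt
  have hfne : ∀ a b, a ≠ b → ¬ H.Adj a b → f a ≠ f b := by
    intro a b hab hnadj heq
    exact C.valid ⟨hab, Or.inl ⟨by rw [hreg a, hreg b], hnadj⟩⟩ (Fin.val_injective heq)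
  -- degrees in the product
  have degnone : ∀ (i : Fin 3) (inst : Fintype ((coneGraph H □ pathGraph 3).neighborSet (none, i))),
      @SimpleGraph.degree _ (coneGraph H □ pathGraph 3) (none, i) inst
        = Fintype.card V + (if i.val = 1 then 2 else 1) := by
    intro i inst
    rw [degree_inst_irrel _ _ inst inferInstance]
    rw [SimpleGraph.degree_boxProd]
    show (coneGraph H).degree none + (pathGraph 3).degree i = _
    rw [cone_deg_none, path_deg]
  have degsome : ∀ (a : V) (i : Fin 3)
      (inst : Fintype ((coneGraph H □ pathGraph 3).neighborSet (some a, i))),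
      @SimpleGraph.degree _ (coneGraph H □ pathGraph 3) (some a, i) inst
        = (k + 1) + (if i.val = 1 then 2 else 1) := by
    intro a i inst
    rw [degree_inst_irrel _ _ inst inferInstance]
    rw [SimpleGraph.degree_boxProd]
    show (coneGraph H).degree (some a) + (pathGraph 3).degree i = _
    rw [cone_deg_some, path_deg, hreg a]
  -- bound for the coloring values
  have hcb : ∀ (x : Option V) (m : ℕ), colF n f x m < 2 * n := by
    rintro (_ | a) m
    · simp only [colF_none]; split_ifs <;> omega
    · have h1 := hflt a
      have h2 : (f a + 1) % n < n := Nat.mod_lt _ (by omega)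
      simp only [colF_some]; split_ifs <;> omega
  -- the coloring
  have hco : (deltaComp (coneGraph H □ pathGraph 3)).Colorable (2 * n) := by
    refine ⟨SimpleGraph.Coloring.mk
      (fun p => (⟨colF n f p.1 p.2.val, hcb p.1 p.2.val⟩ : Fin (2 * n))) ?_⟩
    intro p q hadj heq
    obtain ⟨x, i⟩ := p
    obtain ⟨y, j⟩ := q
    obtain ⟨hne, hor⟩ := hadj
    have hcc : colF n f x i.val = colF n f y j.val := congrArg Fin.val heq
    clear heq
    obtain ⟨iv, hiv⟩ := i
    obtain ⟨jv, hjv⟩ := j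
    rcases x with _ | a <;> rcases y with _ | b
    · -- none, none
      simp only [colF_none, Fin.val_mk] at hcc
      simp only [degnone, Fin.val_mk] at hor
      interval_cases iv <;> interval_cases jv <;> norm_num at hcc <;>
        first
          | exact hne rfl
          | omega
    · -- none, some b
      have hfb := hflt b
      have hmb : (f b + 1) % n < n := Nat.mod_lt _ (by omega)
      simp only [colF_none, colF_some, Fin.val_mk] at hcc
      simp only [degnone, degsome, Fin.val_mk] at hor
      interval_cases iv <;> interval_cases jv <;> norm_num at hcc ⊢ <;>
        first
          | omega
          | (rcases hor with ⟨hd, -⟩ | ⟨-, hadj2⟩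
             · simp at hd <;> omega
             · rcases hadj2 with ⟨-, hij⟩ | ⟨-, hxy⟩
               · simp at hij
               · simp at hxy)
    · -- some a, none
      have hfa := hflt a
      have hma : (f a + 1) % n < n := Nat.mod_lt _ (by omega)
      simp only [colF_none, colF_some, Fin.val_mk] at hcc
      simp only [degnone, degsome, Fin.val_mk] at hor
      interval_cases iv <;> interval_cases jv <;> norm_num at hcc ⊢ <;>
        first
          | omega
          | (rcases hor with ⟨hd, -⟩ | ⟨-, hadj2⟩
             · simp at hd <;> omega
             · rcases hadj2 with ⟨-, hij⟩ | ⟨-, hxy⟩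
               · simp at hij
               · simp at hxy)
    · -- some a, some b
      have hfa := hflt a
      have hfb := hflt b
      have hma : (f a + 1) % n < n := Nat.mod_lt _ (by omega)
      have hmb : (f b + 1) % n < n := Nat.mod_lt _ (by omega)
      simp only [colF_some, Fin.val_mk] at hcc
      simp only [degsome, Fin.val_mk] at hor
      interval_cases iv <;> interval_cases jv <;> norm_num at hcc ⊢ <;>
        first
          | omega
          | -- same-column cases : use the coloring of deltaComp H
            (rcases hor with ⟨-, hna⟩ | ⟨hd, -⟩
             · have hab : a ≠ b := fun h => hne (by rw [h])
               have hnadj : ¬ H.Adj a b := fun h => hna (Or.inl ⟨h, rfl⟩)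
               have hee := hfne a b hab hnadj
               first
                 | omega
                 | exact hee (modsucc_inj hn2 (hflt a) (hflt b) (by omega))
             · exact hd rfl)
          | -- adjacent-column cases: adjacency forces a = b
            (rcases hor with ⟨hd, -⟩ | ⟨-, hadj2⟩
             · simp at hd <;> omega
             · rcases hadj2 with ⟨-, hij⟩ | ⟨-, hxy⟩
               · simp at hij
               · injection hxy with hab
                 subst hab
                 have h1 := modsucc_ne hn2 (hflt a)
                 omega)
  -- conclude
  have hle := hco.chromaticNumber_le
  calc deltaChrom (coneGraph H □ pathGraph 3)
      ≤ ((2 * n : ℕ) : ℕ∞) := hle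
    _ = 2 * (n : ℕ∞) := by push_cast; ring
    _ = 2 * deltaChrom H := by rw [hcast]
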